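/- Let G be a Δ-regular graph on vertex set V of size D whose adjacency matrix has second-largest eigenvalue (in absolute value) at most λ. For x, y ∈ {-1,1}^V, define x^G ∈ {-1,1}^{E'} indexed by the ΔD directed edge-ends of G, where the coordinate for the edge-end at vertex u leading to vertex v has value x(u)x(v). Then |⟨x^G, y^G⟩ − (Δ/D)·⟨x,y⟩²| ≤ 2λD. -/

import Mathlib

/-- Approximate squaring via an expander.  `A` is the adjacency matrix of a
`(D, Δ, λ)`-graph: `Δ`-regular on `D` vertices with all eigenvalues other
than the largest bounded by `lam` in absolute value (expressed via the
quadratic form on zero-sum vectors).  Then the vector `x^G`, indexed by the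
`ΔD` directed edge-ends and with value `x(u)x(v)` on the edge-end at `u`
leading to `v`, satisfies `|⟨x^G, y^G⟩ − (Δ/D)·⟨x,y⟩²| ≤ 2λD`. -/
theorem approximate_squaring (D : ℕ) (hD : 0 < D) (Δ lam : ℝ)
    (hΔ : 0 < Δ) (hlam : 0 ≤ lam)
    (A : Matrix (Fin D) (Fin D) ℝ) (hsym : A.IsSymm)
    (hnn : ∀ u v, 0 ≤ A u v)
    (hreg : ∀ u, ∑ v, A u v = Δ)
    (hspec : ∀ z : Fin D → ℝ, (∑ u, z u) = 0 →
      |∑ u, ∑ v, A u v * z u * z v| ≤ lam * ∑ u, (z u) ^ 2)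
    (x y : Fin D → ℤ)
    (hx : ∀ u, x u = 1 ∨ x u = -1) (hy : ∀ u, y u = 1 ∨ y u = -1) :
    |(∑ u, ∑ v, A u v * ((x u * x v * y u * y v : ℤ) : ℝ))
        - (Δ / D) * ((∑ u, x u * y u : ℤ) : ℝ) ^ 2| ≤ 2 * lam * D := by
  have hDr : (0:ℝ) < D := by exact_mod_cast hD
  set z : Fin D → ℝ := fun u => ((x u * y u : ℤ) : ℝ) with hzdef
  have hzsq : ∀ u, z u ^ 2 = 1 := by
    intro u
    rcases hx u with h | h <;> rcases hy u with h' | h' <;>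
      simp [hzdef, h, h']
  set s : ℝ := ∑ u, z u with hs
  set c : ℝ := s / D with hc
  set w : Fin D → ℝ := fun u => z u - c with hwdef
  have hws : ∑ u, w u = 0 := by
    simp only [hwdef, Finset.sum_sub_distrib, Finset.sum_const,
      Finset.card_univ, Fintype.card_fin, nsmul_eq_mul, ← hs, hc]
    field_simp
    ring
  have hcol : ∀ v, ∑ u, A u v = Δ := by
    intro v
    rw [← hreg v]
    exact Finset.sum_congr rfl fun u _ => (hsym.apply v u)
  -- rewrite entries
  have hentry : ∀ u v, ((x u * x v * y u * y v : ℤ) : ℝ) = z u * z v := by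
    intro u v; simp only [hzdef]; push_cast; ring
  have hxy : ((∑ u, x u * y u : ℤ) : ℝ) = s := by
    simp [hs, hzdef]
  -- main algebraic identity
  have key : (∑ u, ∑ v, A u v * z u * z v)
      = (∑ u, ∑ v, A u v * w u * w v) + (Δ / D) * s ^ 2 := by
    have hzw : ∀ u, z u = w u + c := by intro u; simp [hwdef]
    have expand : ∀ u v, A u v * z u * z v
        = A u v * w u * w v + c * (A u v * w u) + c * (A u v * w v)
          + c ^ 2 * A u v := by
      intro u v; rw [hzw u, hzw v]; ring
    have h1 : ∑ u, ∑ v, A u v * z u * z v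
        = (∑ u, ∑ v, A u v * w u * w v)
          + c * (∑ u, ∑ v, A u v * w u)
          + c * (∑ u, ∑ v, A u v * w v)
          + c ^ 2 * (∑ u, ∑ v, A u v) := by
      simp only [expand, Finset.sum_add_distrib, Finset.mul_sum]
    have h2 : (∑ u, ∑ v, A u v * w u) = 0 := by
      have : ∀ u, ∑ v, A u v * w u = Δ * w u := by
        intro u; rw [← Finset.sum_mul, hreg u]
      simp only [this, ← Finset.mul_sum, hws, mul_zero]
    have h3 : (∑ u, ∑ v, A u v * w v) = 0 := by
      rw [Finset.sum_comm]
      have : ∀ v, ∑ u, A u v * w v = Δ * w v := by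
        intro v; rw [← Finset.sum_mul, hcol v]
      simp only [this, ← Finset.mul_sum, hws, mul_zero]
    have h4 : (∑ u, ∑ v, A u v) = Δ * D := by
      simp only [hreg, Finset.sum_const, Finset.card_univ, Fintype.card_fin,
        nsmul_eq_mul]
      ring
    rw [h1, h2, h3, h4]
    have : c ^ 2 * (Δ * D) = Δ / D * s ^ 2 := by
      rw [hc]; field_simp
    rw [this]; ring
  -- bound on the error term
  have hwsq : (∑ u, (w u) ^ 2) ≤ D := by
    have : (∑ u, (w u) ^ 2) = D - s ^ 2 / D := by
      have : ∀ u, (w u) ^ 2 = z u ^ 2 - 2 * c * z u + c ^ 2 := by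
        intro u; simp [hwdef]; ring
      simp only [this, Finset.sum_add_distrib, Finset.sum_sub_distrib, hzsq,
        Finset.sum_const, Finset.card_univ, Fintype.card_fin, nsmul_eq_mul,
        ← Finset.mul_sum, ← hs, hc]
      field_simp
      ring
    rw [this]
    have : 0 ≤ s ^ 2 / D := div_nonneg (sq_nonneg s) hDr.le
    linarith
  have hbound := hspec w hws
  have hfin : |∑ u, ∑ v, A u v * w u * w v| ≤ lam * D :=
    hbound.trans (by nlinarith)
  calc |(∑ u, ∑ v, A u v * ((x u * x v * y u * y v : ℤ) : ℝ))
        - (Δ / D) * ((∑ u, x u * y u : ℤ) : ℝ) ^ 2|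
      = |∑ u, ∑ v, A u v * w u * w v| := by
        have e : (∑ u, ∑ v, A u v * ((x u * x v * y u * y v : ℤ) : ℝ))
            = ∑ u, ∑ v, A u v * z u * z v := by
          refine Finset.sum_congr rfl fun u _ => Finset.sum_congr rfl fun v _ => ?_
          rw [hentry u v]; ring
        rw [e, hxy, key]; congr 1; ring
    _ ≤ lam * D := hfin
    _ ≤ 2 * lam * D := by nlinarith
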